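/- Let A, B be bounded operators on a complex Hilbert space H and T = [[A, B], [B, A]] on H ⊕ H. Then ber(T) ≤ (1/2)·(ber(|A| + |A*|) + ber(|B| + |B*|)), where ber is the supremum of |⟨· k, k⟩| over normalized reproducing kernels of the relevant spaces. -/

import Mathlib

open scoped InnerProductSpace
open ContinuousLinearMap Complex

variable {H : Type*} [NormedAddCommGroup H] [InnerProductSpace ℂ H] [CompleteSpace H]

/-- The absolute value `|T| = (T*T)^(1/2)` of an operator. -/
noncomputable def oabs (T : H →L[ℂ] H) : H →L[ℂ] H :=
  cfc Real.sqrt (ContinuousLinearMap.adjoint T * T)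

set_option maxHeartbeats 1000000

lemma my_mul_pow_comm (T : H →L[ℂ] H) (n : ℕ) :
    T * (adjoint T * T) ^ n = (T * adjoint T) ^ n * T := by
  induction n with
  | zero => simp
  | succ n ih =>
    rw [pow_succ, ← mul_assoc, ih, pow_succ]
    simp only [mul_assoc]

open Polynomial in
lemma my_mul_aeval_comm (T : H →L[ℂ] H) (q : ℝ[X]) :
    T * aeval (adjoint T * T) q = aeval (T * adjoint T) q * T := by
  induction q using Polynomial.induction_on with
  | C r => simp [Algebra.algebraMap_eq_smul_one, smul_mul_assoc, mul_smul_comm]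
  | add q₁ q₂ h₁ h₂ => simp [mul_add, add_mul, h₁, h₂]
  | monomial n r _ =>
    simp only [map_mul, aeval_C, map_pow, aeval_X, Algebra.algebraMap_eq_smul_one,
      smul_mul_assoc, one_mul, mul_smul_comm, my_mul_pow_comm]

lemma my_mul_cfc_comm (T : H →L[ℂ] H) {f : ℝ → ℝ} (hf : Continuous f) :
    T * cfc f (adjoint T * T) = cfc f (T * adjoint T) * T := by
  set S := adjoint T * T with hSdef
  set S' := T * adjoint T with hS'def
  have hS : IsSelfAdjoint S := by
    rw [hSdef, ← star_eq_adjoint]; exact IsSelfAdjoint.star_mul_self T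
  have hS' : IsSelfAdjoint S' := by
    rw [hS'def, ← star_eq_adjoint]; exact IsSelfAdjoint.mul_star_self T
  -- a common compact interval containing both spectra
  obtain ⟨r₁, hr₁⟩ := (spectrum.isBounded (𝕜 := ℝ) S).subset_closedBall 0
  obtain ⟨r₂, hr₂⟩ := (spectrum.isBounded (𝕜 := ℝ) S').subset_closedBall 0
  set R : ℝ := max r₁ r₂ with hR
  have hsub : Metric.closedBall (0:ℝ) r₁ ⊆ Set.Icc (-R) R := by
    intro t ht
    simp only [Metric.mem_closedBall, Real.dist_eq, sub_zero] at ht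
    have := abs_le.mp ht
    constructor <;> [linarith [le_max_left r₁ r₂, this.1]; linarith [le_max_left r₁ r₂, this.2]]
  have hsub' : Metric.closedBall (0:ℝ) r₂ ⊆ Set.Icc (-R) R := by
    intro t ht
    simp only [Metric.mem_closedBall, Real.dist_eq, sub_zero] at ht
    have := abs_le.mp ht
    constructor <;> [linarith [le_max_right r₁ r₂, this.1]; linarith [le_max_right r₁ r₂, this.2]]
  have hspec : spectrum ℝ S ⊆ Set.Icc (-R) R := hr₁.trans hsub
  have hspec' : spectrum ℝ S' ⊆ Set.Icc (-R) R := hr₂.trans hsub'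
  have key : ∀ δ : ℝ, 0 < δ → ‖T * cfc f S - cfc f S' * T‖ ≤ 2 * δ * ‖T‖ := by
    intro δ hδ
    obtain ⟨q, hq⟩ := exists_polynomial_near_of_continuousOn (-R) R f hf.continuousOn δ hδ
    have e1 : ‖cfc f S - cfc q.eval S‖ ≤ δ := by
      rw [← cfc_sub f q.eval S hf.continuousOn (q.continuous.continuousOn)]
      refine norm_cfc_le hδ.le fun t ht => ?_
      rw [Real.norm_eq_abs, abs_sub_comm]
      exact (hq t (hspec ht)).le
    have e1' : ‖cfc q.eval S' - cfc f S'‖ ≤ δ := by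
      rw [← cfc_sub q.eval f S' (q.continuous.continuousOn) hf.continuousOn]
      refine norm_cfc_le hδ.le fun t ht => ?_
      rw [Real.norm_eq_abs]
      exact (hq t (hspec' ht)).le
    have e2 : T * cfc q.eval S = cfc q.eval S' * T := by
      rw [cfc_polynomial q S hS, cfc_polynomial q S' hS']
      exact my_mul_aeval_comm T q
    calc ‖T * cfc f S - cfc f S' * T‖
        = ‖T * (cfc f S - cfc q.eval S) + (cfc q.eval S' - cfc f S') * T‖ := by
          rw [mul_sub, sub_mul, e2]; congr 1; abel
      _ ≤ ‖T * (cfc f S - cfc q.eval S)‖ + ‖(cfc q.eval S' - cfc f S') * T‖ := norm_add_le _ _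
      _ ≤ ‖T‖ * ‖cfc f S - cfc q.eval S‖ + ‖cfc q.eval S' - cfc f S'‖ * ‖T‖ :=
          add_le_add (norm_mul_le _ _) (norm_mul_le _ _)
      _ ≤ ‖T‖ * δ + δ * ‖T‖ := by
          refine add_le_add ?_ ?_
          · exact mul_le_mul_of_nonneg_left e1 (norm_nonneg _)
          · exact mul_le_mul_of_nonneg_right e1' (norm_nonneg _)
      _ = 2 * δ * ‖T‖ := by ring
  have : ‖T * cfc f S - cfc f S' * T‖ ≤ 0 := by
    refine le_of_forall_pos_le_add fun ε hε => ?_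
    rcases eq_or_lt_of_le (norm_nonneg T) with hT | hT
    · have := key 1 one_pos
      rw [← hT] at this
      simpa using this.trans (by linarith)
    · have := key (ε / (2 * ‖T‖)) (by positivity)
      rw [zero_add]
      refine this.trans ?_
      have h2 : 2 * (ε / (2 * ‖T‖)) * ‖T‖ = ε := by
        field_simp
      rw [h2]
  have h0 : T * cfc f S - cfc f S' * T = 0 :=
    norm_le_zero_iff.mp this
  exact sub_eq_zero.mp h0


lemma my_sqrt_add_le {a b : ℝ} (ha : 0 ≤ a) (hb : 0 ≤ b) :
    Real.sqrt (a + b) ≤ Real.sqrt a + Real.sqrt b := by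
  rw [show a + b = a + b by rfl]
  have h := Real.sqrt_le_sqrt (show a + b ≤ (Real.sqrt a + Real.sqrt b)^2 by
    have h1 := Real.sq_sqrt ha
    have h2 := Real.sq_sqrt hb
    nlinarith [Real.sqrt_nonneg a, Real.sqrt_nonneg b])
  rwa [Real.sqrt_sq (by positivity)] at h

lemma my_inner_re_mono {W V : H →L[ℂ] H} (h : W ≤ V) (x : H) :
    (⟪W x, x⟫_ℂ).re ≤ (⟪V x, x⟫_ℂ).re := by
  have h0 := ((ContinuousLinearMap.le_def W V).mp h).inner_nonneg_left x
  simp only [ContinuousLinearMap.sub_apply, inner_sub_left, map_sub, RCLike.re_to_complex] at h0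
  have h1 := (Complex.le_def.mp h0).1
  rw [Complex.zero_re, Complex.sub_re] at h1
  linarith

lemma my_inner_re_nonneg {V : H →L[ℂ] H} (h : (0 : H →L[ℂ] H) ≤ V) (x : H) :
    0 ≤ (⟪V x, x⟫_ℂ).re := by
  simpa using my_inner_re_mono h x

lemma my_oabs_nonneg (T : H →L[ℂ] H) : (0 : H →L[ℂ] H) ≤ oabs T :=
  cfc_nonneg fun t _ => Real.sqrt_nonneg t

lemma my_algebraMap_inner_re (r : ℝ) (x : H) :
    (⟪(algebraMap ℝ (H →L[ℂ] H) r) x, x⟫_ℂ).re = r * ‖x‖ ^ 2 := by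
  rw [Algebra.algebraMap_eq_smul_one, ContinuousLinearMap.smul_apply,
    ContinuousLinearMap.one_apply, ← algebraMap_smul ℂ r x, Complex.coe_algebraMap,
    inner_smul_left, Complex.conj_ofReal, Complex.re_ofReal_mul]
  congr 1
  simpa using inner_self_eq_norm_sq (𝕜 := ℂ) x

lemma my_kato_eps (T : H →L[ℂ] H) (x y : H) {ε : ℝ} (hε : 0 < ε) :
    ‖⟪T x, y⟫_ℂ‖ ^ 2 ≤
      ((⟪oabs T x, x⟫_ℂ).re + Real.sqrt ε * ‖x‖ ^ 2) * (⟪oabs (adjoint T) y, y⟫_ℂ).re := by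
  set S := adjoint T * T with hSdef
  set S' := T * adjoint T with hS'def
  have hS : IsSelfAdjoint S := by rw [hSdef, ← star_eq_adjoint]; exact .star_mul_self T
  have hS' : IsSelfAdjoint S' := by rw [hS'def, ← star_eq_adjoint]; exact .mul_star_self T
  have hS0 : (0 : H →L[ℂ] H) ≤ S := by rw [hSdef, ← star_eq_adjoint]; exact star_mul_self_nonneg T
  have hS'0 : (0 : H →L[ℂ] H) ≤ S' := by
    rw [hS'def, ← star_eq_adjoint]; exact mul_star_self_nonneg T
  have habs : ∀ t : ℝ, 0 < |t| + ε := fun t => by positivity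
  set p : ℝ → ℝ := fun t => Real.sqrt (Real.sqrt (|t| + ε)) with hpdef
  have hp : Continuous p :=
    Real.continuous_sqrt.comp (Real.continuous_sqrt.comp (_root_.continuous_abs.add continuous_const))
  have hppos : ∀ t, 0 < p t := fun t => Real.sqrt_pos.mpr (Real.sqrt_pos.mpr (habs t))
  set q : ℝ → ℝ := fun t => (p t)⁻¹ with hqdef
  have hq : Continuous q := hp.inv₀ fun t => (hppos t).ne'
  set P := cfc p S with hPdef
  set Q := cfc q S with hQdef
  have hPsa : IsSelfAdjoint P := cfc_predicate p S
  have hQsa : IsSelfAdjoint Q := cfc_predicate q S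
  have hPadj : adjoint P = P := by rw [← star_eq_adjoint]; exact hPsa
  have hQadj : adjoint Q = Q := by rw [← star_eq_adjoint]; exact hQsa
  have hQP : Q * P = 1 := by
    rw [hQdef, hPdef, ← cfc_mul q p S hq.continuousOn hp.continuousOn]
    have h1 : cfc (fun t => q t * p t) S = cfc (fun _ : ℝ => (1 : ℝ)) S :=
      cfc_congr fun t _ => inv_mul_cancel₀ (hppos t).ne'
    rw [h1, cfc_const 1 S hS, map_one]
  have hx' : Q (P x) = x := by
    rw [← ContinuousLinearMap.mul_apply, hQP, ContinuousLinearMap.one_apply]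
  set z := adjoint T y with hzdef
  have hinner : ⟪T x, y⟫_ℂ = ⟪P x, Q z⟫_ℂ := by
    calc ⟪T x, y⟫_ℂ = ⟪x, z⟫_ℂ := (adjoint_inner_right T x y).symm
      _ = ⟪Q (P x), z⟫_ℂ := by rw [hx']
      _ = ⟪adjoint Q (P x), z⟫_ℂ := by rw [hQadj]
      _ = ⟪P x, Q z⟫_ℂ := adjoint_inner_left Q z (P x)
  have hCS : ‖⟪T x, y⟫_ℂ‖ ≤ ‖P x‖ * ‖Q z‖ := by
    rw [hinner]; exact norm_inner_le_norm _ _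
  -- ‖P x‖ ^ 2
  set P2 := cfc (fun t => Real.sqrt (|t| + ε)) S with hP2def
  have hPP : P * P = P2 := by
    rw [hPdef, ← cfc_mul p p S hp.continuousOn hp.continuousOn]
    exact cfc_congr fun t _ => Real.mul_self_sqrt (Real.sqrt_nonneg _)
  have hPx : ‖P x‖ ^ 2 = (⟪P2 x, x⟫_ℂ).re := by
    have h1 : ⟪P2 x, x⟫_ℂ = ⟪P x, P x⟫_ℂ := by
      calc ⟪P2 x, x⟫_ℂ = ⟪(adjoint P) (P x), x⟫_ℂ := by
            rw [hPadj, ← ContinuousLinearMap.mul_apply, hPP]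
        _ = ⟪P x, P x⟫_ℂ := adjoint_inner_left P x (P x)
    rw [h1]
    simpa using (inner_self_eq_norm_sq (𝕜 := ℂ) (P x)).symm
  -- ‖Q z‖ ^ 2
  set q2 : ℝ → ℝ := fun t => (Real.sqrt (|t| + ε))⁻¹ with hq2def
  have hq2 : Continuous q2 :=
    (Real.continuous_sqrt.comp (_root_.continuous_abs.add continuous_const)).inv₀
      fun t => (Real.sqrt_pos.mpr (habs t)).ne'
  have hQQ : Q * Q = cfc q2 S := by
    rw [hQdef, ← cfc_mul q q S hq.continuousOn hq.continuousOn]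
    refine cfc_congr fun t _ => ?_
    simp only [hqdef, hpdef, ← mul_inv]
    rw [Real.mul_self_sqrt (Real.sqrt_nonneg _)]
  set G := cfc (fun t => t * (Real.sqrt (|t| + ε))⁻¹) S' with hGdef
  have hTQQT : T * (Q * Q) * adjoint T = G := by
    have hstep : T * (Q * Q) = cfc q2 S' * T := by rw [hQQ]; exact my_mul_cfc_comm T hq2
    calc T * (Q * Q) * adjoint T = cfc q2 S' * S' := by rw [hstep, mul_assoc]
      _ = cfc q2 S' * cfc (id : ℝ → ℝ) S' := by rw [cfc_id ℝ S' hS']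
      _ = cfc (fun t => q2 t * t) S' := by
          rw [← cfc_mul q2 (id : ℝ → ℝ) S' hq2.continuousOn continuous_id.continuousOn]
          rfl
      _ = G := cfc_congr fun t _ => by simp [hq2def, mul_comm]
  have hQz : ‖Q z‖ ^ 2 = (⟪G y, y⟫_ℂ).re := by
    have h1 : ⟪G y, y⟫_ℂ = ⟪Q z, Q z⟫_ℂ := by
      calc ⟪G y, y⟫_ℂ = ⟪(T * (Q * Q) * adjoint T) y, y⟫_ℂ := by rw [hTQQT]
        _ = ⟪T ((Q * Q) z), y⟫_ℂ := rfl
        _ = ⟪(Q * Q) z, z⟫_ℂ := (adjoint_inner_right T ((Q * Q) z) y).symm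
        _ = ⟪adjoint Q (Q z), z⟫_ℂ := by rw [hQadj, ContinuousLinearMap.mul_apply]
        _ = ⟪Q z, Q z⟫_ℂ := adjoint_inner_left Q z (Q z)
    rw [h1]
    simpa using (inner_self_eq_norm_sq (𝕜 := ℂ) (Q z)).symm
  -- operator inequalities
  have hspecS : ∀ t ∈ spectrum ℝ S, 0 ≤ t := fun t ht => spectrum_nonneg_of_nonneg hS0 ht
  have hspecS' : ∀ t ∈ spectrum ℝ S', 0 ≤ t := fun t ht => spectrum_nonneg_of_nonneg hS'0 ht
  have hP2le : P2 ≤ oabs T + algebraMap ℝ (H →L[ℂ] H) (Real.sqrt ε) := by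
    have h1 : oabs T + algebraMap ℝ (H →L[ℂ] H) (Real.sqrt ε) =
        cfc (fun t => Real.sqrt t + Real.sqrt ε) S := by
      rw [cfc_add S _ _ Real.continuous_sqrt.continuousOn continuousOn_const,
        cfc_const (Real.sqrt ε) S hS]
      rfl
    rw [h1, hP2def]
    refine cfc_mono (fun t ht => ?_)
      ((Real.continuous_sqrt.comp (_root_.continuous_abs.add continuous_const)).continuousOn)
      ((Real.continuous_sqrt.add continuous_const).continuousOn)
    rw [_root_.abs_of_nonneg (hspecS t ht)]
    exact my_sqrt_add_le (hspecS t ht) hε.le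
  have hGle : G ≤ oabs (adjoint T) := by
    have h1 : oabs (adjoint T) = cfc Real.sqrt S' := by
      rw [oabs, adjoint_adjoint]
    rw [h1, hGdef]
    refine cfc_mono (fun t ht => ?_)
      ((continuous_id.mul ((Real.continuous_sqrt.comp
        (_root_.continuous_abs.add continuous_const)).inv₀
        fun t => (Real.sqrt_pos.mpr (habs t)).ne')).continuousOn)
      (Real.continuous_sqrt.continuousOn)
    have ht0 := hspecS' t ht
    rw [_root_.abs_of_nonneg ht0]
    have hs : 0 < Real.sqrt (t + ε) := Real.sqrt_pos.mpr (by linarith)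
    rw [mul_inv_le_iff₀ hs]
    calc t = Real.sqrt t * Real.sqrt t := (Real.mul_self_sqrt ht0).symm
      _ ≤ Real.sqrt t * Real.sqrt (t + ε) :=
          mul_le_mul_of_nonneg_left (Real.sqrt_le_sqrt (by linarith)) (Real.sqrt_nonneg t)
  -- assemble
  have hGy0 : 0 ≤ (⟪G y, y⟫_ℂ).re := hQz ▸ sq_nonneg ‖Q z‖
  have hP2x0 : 0 ≤ (⟪P2 x, x⟫_ℂ).re := hPx ▸ sq_nonneg ‖P x‖
  calc ‖⟪T x, y⟫_ℂ‖ ^ 2 ≤ (‖P x‖ * ‖Q z‖) ^ 2 := by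
        exact pow_le_pow_left₀ (norm_nonneg _) hCS 2
    _ = (⟪P2 x, x⟫_ℂ).re * (⟪G y, y⟫_ℂ).re := by rw [mul_pow, hPx, hQz]
    _ ≤ ((⟪oabs T x, x⟫_ℂ).re + Real.sqrt ε * ‖x‖ ^ 2) * (⟪G y, y⟫_ℂ).re := by
        refine mul_le_mul_of_nonneg_right ?_ hGy0
        have := my_inner_re_mono hP2le x
        simp only [ContinuousLinearMap.add_apply, inner_add_left, Complex.add_re,
          my_algebraMap_inner_re] at this
        linarith
    _ ≤ ((⟪oabs T x, x⟫_ℂ).re + Real.sqrt ε * ‖x‖ ^ 2) * (⟪oabs (adjoint T) y, y⟫_ℂ).re := by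
        refine mul_le_mul_of_nonneg_left (my_inner_re_mono hGle y) ?_
        have h0 : 0 ≤ (⟪oabs T x, x⟫_ℂ).re := my_inner_re_nonneg (my_oabs_nonneg T) x
        positivity

lemma my_kato (T : H →L[ℂ] H) (x y : H) :
    ‖⟪T x, y⟫_ℂ‖ ≤ ((⟪oabs T x, x⟫_ℂ).re + (⟪oabs (adjoint T) y, y⟫_ℂ).re) / 2 := by
  set a := (⟪oabs T x, x⟫_ℂ).re with hadef
  set b := (⟪oabs (adjoint T) y, y⟫_ℂ).re with hbdef
  have ha0 : 0 ≤ a := my_inner_re_nonneg (my_oabs_nonneg T) x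
  have hb0 : 0 ≤ b := my_inner_re_nonneg (my_oabs_nonneg (adjoint T)) y
  have hsq : ‖⟪T x, y⟫_ℂ‖ ^ 2 ≤ a * b := by
    refine le_of_forall_pos_le_add fun c hc => ?_
    set ε := (c / (‖x‖ ^ 2 * b + 1)) ^ 2 with hεdef
    have hden : 0 < ‖x‖ ^ 2 * b + 1 := by positivity
    have hε : 0 < ε := by positivity
    have hsqrtε : Real.sqrt ε = c / (‖x‖ ^ 2 * b + 1) := Real.sqrt_sq (by positivity)
    have h1 := my_kato_eps T x y hε
    rw [← hadef, ← hbdef, hsqrtε] at h1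
    refine h1.trans ?_
    have h2 : c / (‖x‖ ^ 2 * b + 1) * ‖x‖ ^ 2 * b ≤ c := by
      rw [div_mul_eq_mul_div, div_mul_eq_mul_div, div_le_iff₀ hden]
      nlinarith
    nlinarith
  nlinarith [norm_nonneg ⟪T x, y⟫_ℂ, sq_nonneg (a - b), sq_nonneg (a + b)]


lemma my_re_le_norm (z : ℂ) : z.re ≤ ‖z‖ := by
  simpa using RCLike.re_le_norm (K := ℂ) z

lemma my_real_smul (r : ℝ) (u : H) : r • u = ((r : ℂ)) • u := by
  rw [← algebraMap_smul ℂ r u, Complex.coe_algebraMap]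

lemma my_scale (M : H →L[ℂ] H) (w : H) (hw : w ≠ 0) (c : ℝ) :
    (⟪M (c • w), c • w⟫_ℂ).re ≤ ‖c • w‖ ^ 2 * ‖⟪M (‖w‖⁻¹ • w), ‖w‖⁻¹ • w⟫_ℂ‖ := by
  have hnw : ‖w‖ ≠ 0 := norm_ne_zero_iff.mpr hw
  have key : ⟪M (c • w), c • w⟫_ℂ =
      (((c * ‖w‖) ^ 2 : ℝ) : ℂ) * ⟪M (‖w‖⁻¹ • w), ‖w‖⁻¹ • w⟫_ℂ := by
    have h1 : c • w = ((c * ‖w‖ : ℝ)) • (‖w‖⁻¹ • w) := by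
      rw [smul_smul]
      congr 1
      field_simp
    rw [h1, my_real_smul, map_smul, inner_smul_left, inner_smul_right, Complex.conj_ofReal]
    push_cast
    ring
  have h2 : ‖c • w‖ ^ 2 = (c * ‖w‖) ^ 2 := by
    rw [norm_smul, Real.norm_eq_abs, mul_pow, mul_pow, _root_.sq_abs]
  rw [key, Complex.re_ofReal_mul, h2]
  exact mul_le_mul_of_nonneg_left (my_re_le_norm _) (sq_nonneg _)


/-- Berezin number bound for `T = [[A, B], [B, A]]` on `H ⊕ H` with respect to the
normalized reproducing kernels `(κ i, κ j)/‖(κ i, κ j)‖`: the Berezin symbol of `T` at such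
a normalized kernel `(u, v)` is `⟪A u, u⟫ + ⟪B v, u⟫ + ⟪B u, v⟫ + ⟪A v, v⟫`, and the
bound is `(1/2)·(ber(|A| + |A*|) + ber(|B| + |B*|))` taken over the kernels of `H`. -/
theorem berezin_symmetric_block {ι : Type*} (κ : ι → H) (hκ : ∀ i, κ i ≠ 0)
    (A B : H →L[ℂ] H) :
    (⨆ p : ι × ι,
        ‖⟪A ((Real.sqrt (‖κ p.1‖ ^ 2 + ‖κ p.2‖ ^ 2))⁻¹ • κ p.1),
            (Real.sqrt (‖κ p.1‖ ^ 2 + ‖κ p.2‖ ^ 2))⁻¹ • κ p.1⟫_ℂ +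
          ⟪B ((Real.sqrt (‖κ p.1‖ ^ 2 + ‖κ p.2‖ ^ 2))⁻¹ • κ p.2),
            (Real.sqrt (‖κ p.1‖ ^ 2 + ‖κ p.2‖ ^ 2))⁻¹ • κ p.1⟫_ℂ +
          ⟪B ((Real.sqrt (‖κ p.1‖ ^ 2 + ‖κ p.2‖ ^ 2))⁻¹ • κ p.1),
            (Real.sqrt (‖κ p.1‖ ^ 2 + ‖κ p.2‖ ^ 2))⁻¹ • κ p.2⟫_ℂ +
          ⟪A ((Real.sqrt (‖κ p.1‖ ^ 2 + ‖κ p.2‖ ^ 2))⁻¹ • κ p.2),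
            (Real.sqrt (‖κ p.1‖ ^ 2 + ‖κ p.2‖ ^ 2))⁻¹ • κ p.2⟫_ℂ‖) ≤
      (1 / 2) *
        ((⨆ i, ‖⟪(oabs A + oabs (ContinuousLinearMap.adjoint A)) (‖κ i‖⁻¹ • κ i),
            ‖κ i‖⁻¹ • κ i⟫_ℂ‖) +
         ⨆ i, ‖⟪(oabs B + oabs (ContinuousLinearMap.adjoint B)) (‖κ i‖⁻¹ • κ i),
            ‖κ i‖⁻¹ • κ i⟫_ℂ‖) := by

  set MA := oabs A + oabs (ContinuousLinearMap.adjoint A) with hMAdef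
  set MB := oabs B + oabs (ContinuousLinearMap.adjoint B) with hMBdef
  have hκn : ∀ i, ‖(‖κ i‖⁻¹ • κ i : H)‖ = 1 := fun i => by
    rw [norm_smul, Real.norm_eq_abs, _root_.abs_of_nonneg (by positivity)]
    field_simp [norm_ne_zero_iff.mpr (hκ i)]
  have hbdd : ∀ M : H →L[ℂ] H,
      BddAbove (Set.range fun i => ‖⟪M ((‖κ i‖⁻¹ • κ i : H)), (‖κ i‖⁻¹ • κ i : H)⟫_ℂ‖) := by
    intro M
    refine ⟨‖M‖, ?_⟩
    rintro _ ⟨i, rfl⟩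
    calc ‖⟪M ((‖κ i‖⁻¹ • κ i : H)), (‖κ i‖⁻¹ • κ i : H)⟫_ℂ‖
        ≤ ‖M ((‖κ i‖⁻¹ • κ i : H))‖ * ‖(‖κ i‖⁻¹ • κ i : H)‖ := norm_inner_le_norm _ _
      _ ≤ (‖M‖ * ‖(‖κ i‖⁻¹ • κ i : H)‖) * ‖(‖κ i‖⁻¹ • κ i : H)‖ :=
          mul_le_mul_of_nonneg_right (M.le_opNorm _) (norm_nonneg _)
      _ = ‖M‖ := by rw [hκn i]; ring
  set berA := ⨆ i, ‖⟪MA ((‖κ i‖⁻¹ • κ i : H)), (‖κ i‖⁻¹ • κ i : H)⟫_ℂ‖ with hberA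
  set berB := ⨆ i, ‖⟪MB ((‖κ i‖⁻¹ • κ i : H)), (‖κ i‖⁻¹ • κ i : H)⟫_ℂ‖ with hberB
  have hberA0 : 0 ≤ berA := Real.iSup_nonneg fun i => norm_nonneg _
  have hberB0 : 0 ≤ berB := Real.iSup_nonneg fun i => norm_nonneg _
  refine Real.iSup_le (fun p => ?_) (by positivity)
  obtain ⟨i, j⟩ := p
  simp only
  set s : ℝ := ‖κ i‖ ^ 2 + ‖κ j‖ ^ 2 with hsdef
  have hs : 0 < s := by
    have := norm_pos_iff.mpr (hκ i)
    positivity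
  set c : ℝ := (Real.sqrt s)⁻¹ with hcdef
  have hc : 0 ≤ c := by positivity
  set u : H := c • κ i with hudef
  set v : H := c • κ j with hvdef
  have huv : ‖u‖ ^ 2 + ‖v‖ ^ 2 = 1 := by
    rw [hudef, hvdef, norm_smul, norm_smul, Real.norm_eq_abs, mul_pow, mul_pow, _root_.sq_abs,
      ← mul_add, ← hsdef, hcdef, ← Real.sqrt_inv, Real.sq_sqrt (by positivity)]
    field_simp
  -- the four Berezin-symbol terms
  have k1 := my_kato A u u
  have k2 := my_kato B v u
  have k3 := my_kato B u v
  have k4 := my_kato A v v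
  -- combine inner products of sums
  have hsplitA : ∀ w : H, (⟪oabs A w, w⟫_ℂ).re + (⟪oabs (ContinuousLinearMap.adjoint A) w, w⟫_ℂ).re
      = (⟪MA w, w⟫_ℂ).re := fun w => by
    simp [hMAdef, ContinuousLinearMap.add_apply, inner_add_left]
  have hsplitB : ∀ w : H, (⟪oabs B w, w⟫_ℂ).re + (⟪oabs (ContinuousLinearMap.adjoint B) w, w⟫_ℂ).re
      = (⟪MB w, w⟫_ℂ).re := fun w => by
    simp [hMBdef, ContinuousLinearMap.add_apply, inner_add_left]
  -- scaling bound against the sups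
  have hboundA : ∀ (w : H) (ℓ : ι), w = κ ℓ →
      (⟪MA (c • w), c • w⟫_ℂ).re ≤ ‖(c • w : H)‖ ^ 2 * berA := by
    rintro w ℓ rfl
    refine (my_scale MA (κ ℓ) (hκ ℓ) c).trans ?_
    exact mul_le_mul_of_nonneg_left (le_ciSup (hbdd MA) ℓ) (sq_nonneg _)
  have hboundB : ∀ (w : H) (ℓ : ι), w = κ ℓ →
      (⟪MB (c • w), c • w⟫_ℂ).re ≤ ‖(c • w : H)‖ ^ 2 * berB := by
    rintro w ℓ rfl
    refine (my_scale MB (κ ℓ) (hκ ℓ) c).trans ?_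
    exact mul_le_mul_of_nonneg_left (le_ciSup (hbdd MB) ℓ) (sq_nonneg _)
  have hAu := hboundA (κ i) i rfl
  have hAv := hboundA (κ j) j rfl
  have hBu := hboundB (κ i) i rfl
  have hBv := hboundB (κ j) j rfl
  rw [← hudef] at hAu hBu
  rw [← hvdef] at hAv hBv
  have e1 := hsplitA u; have e2 := hsplitA v
  have e3 := hsplitB u; have e4 := hsplitB v
  calc ‖⟪A u, u⟫_ℂ + ⟪B v, u⟫_ℂ + ⟪B u, v⟫_ℂ + ⟪A v, v⟫_ℂ‖
      ≤ ‖⟪A u, u⟫_ℂ + ⟪B v, u⟫_ℂ + ⟪B u, v⟫_ℂ‖ + ‖⟪A v, v⟫_ℂ‖ := norm_add_le _ _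
    _ ≤ (‖⟪A u, u⟫_ℂ‖ + ‖⟪B v, u⟫_ℂ‖ + ‖⟪B u, v⟫_ℂ‖) + ‖⟪A v, v⟫_ℂ‖ :=
        add_le_add_left (norm_add₃_le) _
    _ ≤ 1 / 2 * (berA + berB) := by nlinarith [k1, k2, k3, k4, hAu, hAv, hBu, hBv,
        e1, e2, e3, e4, huv]
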